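/- With the same definitions and hypotheses, for p = k the closed-form x^{(k)}_{1,k}(t) = N μ_D μ_P^k ς_P^{k(k+1)/2}/∏_{n=0}^{k-1}(1-ς_P^{n+1}) · [ν_P^{t-k} Ψ_{k,k}(t) − (ν_D ς_D ς_DP^k)^{t-k} Ψ_{k,k}(k)] satisfies the recursion x^{(k)}_{1,k}(t) = ν_D ς_D ς_DP^k x^{(k)}_{1,k}(t-1) + μ_D ς_P^k x_{0,k}(t-1), where x_{0,k}(t) = N μ_P^k ν_P^{t-k} ς_P^{k(k-1)/2} ∏_{n=0}^{k-1}(1-ς_P^{t-n})/(1-ς_P^{n+1}). -/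

import Mathlib

/-- The Gaussian (q-)binomial coefficient. -/
noncomputable def qbinom (t k : ℕ) (q : ℝ) : ℝ :=
  ∏ n ∈ Finset.range k, (1 - q ^ (t - n)) / (1 - q ^ (n + 1))

/-- `Ψ_{p,k}(t)` from the closed-form solution for driver-carrying cells. -/
noncomputable def Psi (νP νD ςP ςD ςDP : ℝ) (p k : ℕ) (t : ℤ) : ℝ :=
  ∑ r ∈ Finset.range (p + 1),
    ((-(ςP ^ (t - p + 1))) ^ r * ςP ^ (r * (r - 1) / 2) * qbinom p r ςP) /
      ∏ j ∈ Finset.Icc p k, (νP * ςP ^ r - νD * ςD * ςDP ^ j)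

/-- Closed form for `x^{(k)}_{1,k}(t)` (primary driver acquired last). -/
noncomputable def x1kk (N μD μP νP νD ςP ςD ςDP : ℝ) (k : ℕ) (t : ℤ) : ℝ :=
  N * μD * μP ^ k * (ςP ^ (k * (k + 1) / 2) / ∏ n ∈ Finset.range k, (1 - ςP ^ (n + 1))) *
    (νP ^ (t - k) * Psi νP νD ςP ςD ςDP k k t -
      (νD * ςD * ςDP ^ k) ^ (t - k) * Psi νP νD ςP ςD ςDP k k k)

/-- Closed form for `x_{0,k}(t)`, the expected number of cells with `k` secondary
drivers and no primary driver. -/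
noncomputable def x0 (N μP νP ςP : ℝ) (k : ℕ) (t : ℤ) : ℝ :=
  N * μP ^ k * νP ^ (t - k) * ςP ^ (k * (k - 1) / 2) *
    ∏ n ∈ Finset.range k, (1 - ςP ^ (t - n)) / (1 - ςP ^ (n + 1))

/-! ### Auxiliary lemmas -/

/-- Denominator product in the q-binomial. -/
noncomputable def Dq (q : ℝ) (r : ℕ) : ℝ := ∏ n ∈ Finset.range r, (1 - q ^ (n + 1))

/-- Numerator product in the q-binomial. -/
noncomputable def Nq (q : ℝ) (k r : ℕ) : ℝ := ∏ n ∈ Finset.range r, (1 - q ^ (k - n))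

lemma tri (r : ℕ) : (r + 1) * r / 2 = r * (r - 1) / 2 + r := by
  have h : (r + 1) * r = r * (r - 1) + 2 * r := by
    cases r with
    | zero => simp
    | succ n => simp [Nat.succ_sub_one]; ring
  rw [h, Nat.add_mul_div_left _ _ (by norm_num : 0 < 2)]

lemma pow_ne_one' {q : ℝ} (hq0 : 0 < q) (hq1 : q ≠ 1) {m : ℕ} (hm : m ≠ 0) : q ^ m ≠ 1 := by
  rcases lt_or_gt_of_ne hq1 with h | h
  · exact ne_of_lt (pow_lt_one₀ hq0.le h hm)
  · exact ne_of_gt (one_lt_pow₀ h hm)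

lemma Dq_ne_zero {q : ℝ} (hq0 : 0 < q) (hq1 : q ≠ 1) (r : ℕ) : Dq q r ≠ 0 := by
  rw [Dq, Finset.prod_ne_zero_iff]
  intro n _
  exact sub_ne_zero.mpr (Ne.symm (pow_ne_one' hq0 hq1 (Nat.succ_ne_zero n)))

lemma qbinom_eq (k r : ℕ) (q : ℝ) : qbinom k r q = Nq q k r / Dq q r := by
  rw [qbinom, Nq, Dq, ← Finset.prod_div_distrib]

lemma Nq_pascal (q : ℝ) {k r : ℕ} (hr : r ≤ k) :
    Nq q (k + 1) (r + 1) = q ^ (r + 1) * Nq q k (r + 1) + (1 - q ^ (r + 1)) * Nq q k r := by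
  have h1 : Nq q (k + 1) (r + 1) = (1 - q ^ (k + 1)) * Nq q k r := by
    rw [Nq, Finset.prod_range_succ']
    simp only [Nat.succ_sub_succ, Nat.sub_zero]
    rw [Nq, mul_comm]
  have h2 : Nq q k (r + 1) = Nq q k r * (1 - q ^ (k - r)) := Finset.prod_range_succ _ _
  have hkr : q ^ (r + 1) * q ^ (k - r) = q ^ (k + 1) := by
    rw [← pow_add]; congr 1; omega
  rw [h1, h2]
  linear_combination (Nq q k r) * hkr

lemma qbinom_pascal {q : ℝ} (hq0 : 0 < q) (hq1 : q ≠ 1) {k r : ℕ} (hr : r ≤ k) :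
    qbinom (k + 1) (r + 1) q = q ^ (r + 1) * qbinom k (r + 1) q + qbinom k r q := by
  have hDr : Dq q r ≠ 0 := Dq_ne_zero hq0 hq1 r
  have hDr1 : Dq q (r + 1) ≠ 0 := Dq_ne_zero hq0 hq1 (r + 1)
  have hstep : Dq q (r + 1) = Dq q r * (1 - q ^ (r + 1)) := Finset.prod_range_succ _ _
  have h1 : (1 : ℝ) - q ^ (r + 1) ≠ 0 := by
    have := hstep ▸ hDr1
    exact fun h => this (by rw [h, mul_zero])
  rw [qbinom_eq, qbinom_eq, qbinom_eq, Nq_pascal q hr, hstep]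
  field_simp

lemma qbinom_self {q : ℝ} (hq0 : 0 < q) (hq1 : q ≠ 1) (k : ℕ) : qbinom k k q = 1 := by
  rw [qbinom_eq]
  have h : Nq q k k = Dq q k := by
    rw [Nq, Dq, ← Finset.prod_range_reflect (fun n => 1 - q ^ (n + 1)) k]
    apply Finset.prod_congr rfl
    intro n hn
    rw [Finset.mem_range] at hn
    congr 2
    omega
  rw [h, div_self (Dq_ne_zero hq0 hq1 k)]

lemma qbinom_succ_self (k : ℕ) (q : ℝ) : qbinom k (k + 1) q = 0 := by
  rw [qbinom]
  apply Finset.prod_eq_zero (Finset.self_mem_range_succ k)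
  simp

lemma qbinom_zero (k : ℕ) (q : ℝ) : qbinom k 0 q = 1 := by simp [qbinom]

/-- The q-binomial theorem (Cauchy/Gauss identity). -/
theorem qbinom_theorem {q : ℝ} (hq0 : 0 < q) (hq1 : q ≠ 1) (k : ℕ) (z : ℝ) :
    ∑ r ∈ Finset.range (k + 1), (-z) ^ r * q ^ (r * (r - 1) / 2) * qbinom k r q
      = ∏ n ∈ Finset.range k, (1 - z * q ^ n) := by
  induction k generalizing z with
  | zero => simp [qbinom]
  | succ k ih =>
    have hprod : ∏ n ∈ Finset.range (k + 1), (1 - z * q ^ n)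
        = (1 - z) * ∏ n ∈ Finset.range k, (1 - z * q * q ^ n) := by
      rw [Finset.prod_range_succ']
      simp only [pow_zero, mul_one, pow_succ]
      rw [mul_comm]
      congr 1
      exact Finset.prod_congr rfl (fun n _ => by ring)
    rw [hprod, ← ih (z * q), Finset.sum_range_succ']
    have hsplit : ∀ r ∈ Finset.range (k + 1),
        (-z) ^ (r + 1) * q ^ ((r + 1) * ((r + 1) - 1) / 2) * qbinom (k + 1) (r + 1) q
        = ((-(z * q)) ^ (r + 1) * q ^ ((r + 1) * ((r + 1) - 1) / 2) * qbinom k (r + 1) q)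
          + (-z) * ((-(z * q)) ^ r * q ^ (r * (r - 1) / 2) * qbinom k r q) := by
      intro r hr
      rw [Finset.mem_range] at hr
      rw [qbinom_pascal hq0 hq1 (by omega : r ≤ k)]
      have e1 : (r + 1) * ((r + 1) - 1) / 2 = r * (r - 1) / 2 + r := by
        simpa using tri r
      rw [e1, pow_add, pow_add]
      have e2 : (-(z * q)) ^ r = (-z) ^ r * q ^ r := by
        rw [neg_mul_eq_neg_mul, mul_pow]
      rw [e2]
      ring
    rw [Finset.sum_congr rfl hsplit, Finset.sum_add_distrib, ← Finset.mul_sum]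
    have hshift : ∑ r ∈ Finset.range (k + 1),
        (-(z * q)) ^ (r + 1) * q ^ ((r + 1) * ((r + 1) - 1) / 2) * qbinom k (r + 1) q
        = (∑ r ∈ Finset.range (k + 1), (-(z * q)) ^ r * q ^ (r * (r - 1) / 2) * qbinom k r q)
          + (-(z * q)) ^ (k + 1) * q ^ ((k + 1) * ((k + 1) - 1) / 2) * qbinom k (k + 1) q
          - 1 := by
      rw [← Finset.sum_range_succ]
      rw [Finset.sum_range_succ'
        (fun r => (-(z * q)) ^ r * q ^ (r * (r - 1) / 2) * qbinom k r q) (k + 1)]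
      simp [qbinom_zero]
    rw [hshift, qbinom_succ_self]
    simp only [qbinom_zero, pow_zero, one_mul, mul_one, mul_zero, zero_mul]
    ring

/-- for `p = k`, the closed form satisfies the recursion
`x^{(k)}_{1,k}(t) = ν_D ς_D ς_DP^k x^{(k)}_{1,k}(t-1) + μ_D ς_P^k x_{0,k}(t-1)`. -/
theorem x1kk_recursion (N μD μP νP νD ςP ςD ςDP : ℝ)
    (hN : 0 < N) (hμD : 0 < μD) (hμP : 0 < μP) (hνP : 0 < νP) (hνD : 0 < νD)
    (hςP : 0 < ςP) (hςD : 0 < ςD) (hςDP : 0 < ςDP)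
    (hςP1 : ςP ≠ 1) (hςDP1 : ςDP ≠ 1)
    (k : ℕ)
    (hden : ∀ r ≤ k, νP * ςP ^ r ≠ νD * ςD * ςDP ^ k)
    (t : ℤ) :
    x1kk N μD μP νP νD ςP ςD ςDP k t
      = νD * ςD * ςDP ^ k * x1kk N μD μP νP νD ςP ςD ςDP k (t - 1)
        + μD * ςP ^ k * x0 N μP νP ςP k (t - 1) := by
  have hςP0 : ςP ≠ 0 := hςP.ne'
  have hνP0 : νP ≠ 0 := hνP.ne'
  have hA0 : νD * ςD * ςDP ^ k ≠ 0 := by positivity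
  have hPsi : ∀ s : ℤ, Psi νP νD ςP ςD ςDP k k s
      = ∑ r ∈ Finset.range (k + 1),
          ((-(ςP ^ (s - k + 1))) ^ r * ςP ^ (r * (r - 1) / 2) * qbinom k r ςP) /
            (νP * ςP ^ r - νD * ςD * ςDP ^ k) := by
    intro s; simp [Psi, Finset.Icc_self]
  -- key telescoping identity
  have hkey : νP ^ (t - (k : ℤ)) * Psi νP νD ςP ςD ςDP k k t
      - (νD * ςD * ςDP ^ k) * (νP ^ (t - 1 - (k : ℤ)) * Psi νP νD ςP ςD ςDP k k (t - 1))
      = νP ^ (t - 1 - (k : ℤ)) * ∏ n ∈ Finset.range k, (1 - ςP ^ (t - (k : ℤ)) * ςP ^ n) := by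
    rw [hPsi t, hPsi (t - 1), ← qbinom_theorem hςP hςP1 k (ςP ^ (t - (k : ℤ)))]
    simp only [Finset.mul_sum]
    rw [← Finset.sum_sub_distrib]
    apply Finset.sum_congr rfl
    intro r hr
    rw [Finset.mem_range] at hr
    have he1 : ςP ^ (t - 1 - (k : ℤ) + 1) = ςP ^ (t - (k : ℤ)) := by congr 1; ring
    have he2 : ςP ^ (t - (k : ℤ) + 1) = ςP ^ (t - (k : ℤ)) * ςP := zpow_add_one₀ hςP0 _
    have hν : νP ^ (t - (k : ℤ)) = νP ^ (t - 1 - (k : ℤ)) * νP := by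
      rw [← zpow_add_one₀ hνP0]; congr 1; ring
    rw [he1, he2, hν]
    have e2 : (-(ςP ^ (t - (k : ℤ)) * ςP)) ^ r = (-(ςP ^ (t - (k : ℤ)))) ^ r * ςP ^ r := by
      rw [← neg_mul]; exact mul_pow _ _ r
    rw [e2]
    have hd : νP * ςP ^ r - νD * ςD * ςDP ^ k ≠ 0 :=
      sub_ne_zero.mpr (hden r (by omega))
    field_simp
  -- the inhomogeneous term
  have hR : μD * ςP ^ k * x0 N μP νP ςP k (t - 1)
      = N * μD * μP ^ k * (ςP ^ (k * (k + 1) / 2) / ∏ n ∈ Finset.range k, (1 - ςP ^ (n + 1)))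
        * (νP ^ (t - 1 - (k : ℤ)) * ∏ n ∈ Finset.range k, (1 - ςP ^ (t - (k : ℤ)) * ςP ^ n)) := by
    have hprodeq : ∏ n ∈ Finset.range k, (1 - ςP ^ (t - (k : ℤ)) * ςP ^ n)
        = ∏ n ∈ Finset.range k, (1 - ςP ^ (t - 1 - (n : ℤ))) := by
      rw [← Finset.prod_range_reflect (fun n => 1 - ςP ^ (t - 1 - (n : ℤ))) k]
      apply Finset.prod_congr rfl
      intro n hn
      rw [Finset.mem_range] at hn
      congr 1
      rw [← zpow_natCast ςP n, ← zpow_add₀ hςP0]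
      congr 1
      omega
    have hK : k * (k + 1) / 2 = k * (k - 1) / 2 + k := by
      rw [mul_comm k (k + 1)]; exact tri k
    rw [x0]
    have hx0prod : ∏ n ∈ Finset.range k, (1 - ςP ^ (t - 1 - (n : ℤ))) / (1 - ςP ^ (n + 1))
        = (∏ n ∈ Finset.range k, (1 - ςP ^ (t - 1 - (n : ℤ))))
          / ∏ n ∈ Finset.range k, (1 - ςP ^ (n + 1)) := by
      rw [Finset.prod_div_distrib]
    rw [hx0prod, hprodeq, hK, pow_add]
    have hD : (∏ n ∈ Finset.range k, (1 - ςP ^ (n + 1))) ≠ 0 := Dq_ne_zero hςP hςP1 k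
    field_simp
  have hAz : (νD * ςD * ςDP ^ k) ^ (t - (k : ℤ))
      = (νD * ςD * ςDP ^ k) * (νD * ςD * ςDP ^ k) ^ (t - 1 - (k : ℤ)) := by
    rw [show t - (k : ℤ) = t - 1 - (k : ℤ) + 1 by ring, zpow_add_one₀ hA0, mul_comm]
  rw [x1kk, x1kk]
  linear_combination
    (N * μD * μP ^ k * (ςP ^ (k * (k + 1) / 2) / ∏ n ∈ Finset.range k, (1 - ςP ^ (n + 1)))) * hkey
    - (N * μD * μP ^ k * (ςP ^ (k * (k + 1) / 2) / ∏ n ∈ Finset.range k, (1 - ςP ^ (n + 1))))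
        * Psi νP νD ςP ςD ςDP k k k * hAz
    - hR
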